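/- Let P_h be the transition kernel P_h f(x) = E[f(Φ_{hτ}(x))] where τ₀,…,τ_n are i.i.d. Exp(1) and Φ_{hτ} is the random splitting with dissipative vector field V₀(x) = −νΛx + F prepended to norm-preserving flows. Then the Euclidean norm is a Lyapunov function: (P_h‖·‖)(x) ≤ γ‖x‖ + K for all x, with γ = (1 + (1/2)ναh)^{−1} ∈ (0,1) and K = ‖F‖/(να). -/

import Mathlib

open MeasureTheory ProbabilityTheory Real
open Set

/-- One cycle of the split dynamics: apply the flows `φ 0, φ 1, …, φ n` in order,
with flow times `t (off), t (off + 1), …, t (off + n)`. -/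
def splitCycle {E : Type*} (n : ℕ) (φ : ℕ → ℝ → E → E) (t : ℕ → ℝ) (off : ℕ) (x : E) : E :=
  (List.range (n + 1)).foldl (fun y k => φ k (t (off + k)) y) x



lemma expMoment {b : ℝ} (hb : 0 < b) :
    ∫ t, exp (-(b * t)) ∂(expMeasure 1) = (1 + b)⁻¹ := by
  have h1b : (0:ℝ) < 1 + b := by linarith
  have hmeas : Measurable fun t : ℝ => exp (-(b * t)) := by fun_prop
  have hpdf : Measurable (exponentialPDF 1) :=
    (measurable_exponentialPDFReal 1).ennreal_ofReal
  have hIoi : ∫ x in Ioi (0:ℝ), exp (-((1+b)*x)) = (1+b)⁻¹ := by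
    rw [MeasureTheory.integral_comp_mul_left_Ioi (fun x => exp (-x)) 0 h1b]
    simp only [mul_zero, smul_eq_mul]
    rw [integral_exp_neg_Ioi_zero, mul_one]
  have hexpm : expMeasure 1 = volume.withDensity (exponentialPDF 1) := rfl
  rw [hexpm, integral_eq_lintegral_of_nonneg_ae (ae_of_all _ fun t => (exp_pos _).le)
      hmeas.aestronglyMeasurable,
    lintegral_withDensity_eq_lintegral_mul _ hpdf hmeas.ennreal_ofReal]
  have key : ∫⁻ t, (exponentialPDF 1 * fun t => ENNReal.ofReal (exp (-(b * t)))) t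
      = ENNReal.ofReal ((1 + b)⁻¹) := by
    rw [← lintegral_add_compl _ (measurableSet_Iio (a := (0:ℝ))), compl_Iio]
    have h0 : ∫⁻ t in Iio (0:ℝ),
        (exponentialPDF 1 * fun t => ENNReal.ofReal (exp (-(b * t)))) t = 0 := by
      rw [setLIntegral_congr_fun (g := fun _ => 0) measurableSet_Iio
        (fun t (ht : t < 0) => by
          simp [exponentialPDF_of_neg ht]), lintegral_zero]
    have h2 : ∫⁻ t in Ici (0:ℝ),
        (exponentialPDF 1 * fun t => ENNReal.ofReal (exp (-(b * t)))) t
        = ∫⁻ t in Ici (0:ℝ), ENNReal.ofReal (exp (-((1+b) * t))) := by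
      refine setLIntegral_congr_fun measurableSet_Ici (fun t (ht : 0 ≤ t) => ?_)
      simp only [Pi.mul_apply, exponentialPDF_of_nonneg ht, one_mul]
      rw [← ENNReal.ofReal_mul (exp_pos _).le, ← exp_add]
      ring_nf
    have hint : IntegrableOn (fun t : ℝ => exp (-((1+b) * t))) (Ici 0) := by
      rw [integrableOn_Ici_iff_integrableOn_Ioi]
      exact (exp_neg_integrableOn_Ioi 0 h1b).congr_fun
        (fun x _ => by simp only [neg_mul]) measurableSet_Ioi
    rw [h0, h2, zero_add,
      ← ofReal_integral_eq_lintegral_ofReal hint (ae_of_all _ fun t => (exp_pos _).le),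
      MeasureTheory.integral_Ici_eq_integral_Ioi, hIoi]
  rw [key, ENNReal.toReal_ofReal (by positivity)]

lemma foldl_norm {E : Type*} [NormedAddCommGroup E] {n : ℕ} (φ : ℕ → ℝ → E → E) (t : ℕ → ℝ)
    (hnorm : ∀ k, 1 ≤ k → k ≤ n → ∀ (s : ℝ) (y : E), ‖φ k s y‖ = ‖y‖) :
    ∀ (l : List ℕ), (∀ k ∈ l, 1 ≤ k ∧ k ≤ n) → ∀ y : E,
      ‖l.foldl (fun y k => φ k (t k) y) y‖ = ‖y‖ := by
  intro l
  induction l with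
  | nil => intro _ y; simp
  | cons a l ih =>
    intro hl y
    simp only [List.foldl_cons]
    rw [ih (fun k hk => hl k (List.mem_cons_of_mem a hk)) _,
      hnorm a (hl a List.mem_cons_self).1 (hl a List.mem_cons_self).2]

lemma splitCycle_norm {E : Type*} [NormedAddCommGroup E] {n : ℕ} (φ : ℕ → ℝ → E → E)
    (t : ℕ → ℝ)
    (hnorm : ∀ k, 1 ≤ k → k ≤ n → ∀ (s : ℝ) (y : E), ‖φ k s y‖ = ‖y‖) (x : E) :
    ‖splitCycle n φ t 0 x‖ = ‖φ 0 (t 0) x‖ := by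
  unfold splitCycle
  simp only [Nat.zero_add]
  rw [List.range_succ_eq_map, List.foldl_cons]
  exact foldl_norm φ t hnorm _
    (fun k hk => by
      obtain ⟨j, hj, rfl⟩ := List.mem_map.1 hk
      exact ⟨Nat.succ_le_succ (Nat.zero_le j), Nat.succ_le_of_lt (List.mem_range.1 hj)⟩) _

/-- The Euclidean norm is a Lyapunov function for the transition kernel of dissipative
random splitting: `P_h‖·‖(x) ≤ γ‖x‖ + K` with `γ = (1 + ναh/2)⁻¹` and `K = ‖F‖/(να)`. -/
theorem norm_lyapunov {d n : ℕ} {Ω : Type*} [MeasureSpace Ω]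
    [IsProbabilityMeasure (ℙ : Measure Ω)]
    (ν α : ℝ) (hν : 0 < ν) (hα : 0 < α) (F : EuclideanSpace ℝ (Fin d))
    (φ : ℕ → ℝ → EuclideanSpace ℝ (Fin d) → EuclideanSpace ℝ (Fin d))
    (hφ0 : ∀ t ≥ (0 : ℝ), ∀ x : EuclideanSpace ℝ (Fin d),
      ‖φ 0 t x‖ ≤ ‖x‖ * Real.exp (-(ν * α * t / 2)) + ‖F‖ / (ν * α))
    (hnorm : ∀ k, 1 ≤ k → k ≤ n →
      ∀ (t : ℝ) (y : EuclideanSpace ℝ (Fin d)), ‖φ k t y‖ = ‖y‖)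
    (h : ℝ) (hh : 0 < h)
    (τ : ℕ → Ω → ℝ) (hmeas : ∀ k, Measurable (τ k))
    (hindep : iIndepFun τ ℙ)
    (hdist : ∀ k, Measure.map (τ k) ℙ = expMeasure 1) :
    ∀ x : EuclideanSpace ℝ (Fin d),
      ∫ ω, ‖splitCycle n φ (fun k => h * τ k ω) 0 x‖ ∂ℙ ≤
        (1 + ν * α * h / 2)⁻¹ * ‖x‖ + ‖F‖ / (ν * α) := by
  intro x
  set c : ℝ := ν * α * h / 2 with hc
  have hcpos : 0 < c := by positivity
  set K : ℝ := ‖F‖ / (ν * α) with hK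
  have hKnn : 0 ≤ K := by positivity
  -- a.e. nonnegativity of τ 0
  have hτnn : ∀ᵐ ω ∂ℙ, 0 ≤ τ 0 ω := by
    have : ℙ (τ 0 ⁻¹' Iio 0) = 0 := by
      rw [← Measure.map_apply (hmeas 0) measurableSet_Iio, hdist 0]
      show (Measure.withDensity volume (exponentialPDF 1)) (Iio 0) = 0
      rw [withDensity_apply _ measurableSet_Iio]
      exact lintegral_exponentialPDF_of_nonpos le_rfl
    filter_upwards [measure_eq_zero_iff_ae_notMem.1 this] with ω hω
    simpa [not_lt] using hω
  -- the dominating function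
  set g : Ω → ℝ := fun ω => ‖x‖ * exp (-(c * τ 0 ω)) + K with hg
  have hgmeas : Measurable g := by fun_prop
  have hexp_le : ∀ ω, 0 ≤ τ 0 ω → exp (-(c * τ 0 ω)) ≤ 1 := fun ω hω => by
    rw [← Real.exp_zero]
    exact Real.exp_le_exp.2 (by nlinarith)
  have hint1 : Integrable (fun ω => exp (-(c * τ 0 ω))) ℙ := by
    refine Integrable.mono' (integrable_const 1)
      (by fun_prop : Measurable fun ω => exp (-(c * τ 0 ω))).aestronglyMeasurable ?_
    filter_upwards [hτnn] with ω hω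
    rw [Real.norm_eq_abs, abs_of_nonneg (exp_pos _).le]
    exact hexp_le ω hω
  have hgint : Integrable g ℙ := ((hint1.const_mul ‖x‖).add (integrable_const K))
  -- pointwise equality and bound
  have hle : ∫ ω, ‖splitCycle n φ (fun k => h * τ k ω) 0 x‖ ∂ℙ ≤ ∫ ω, g ω ∂ℙ := by
    refine integral_mono_of_nonneg (ae_of_all _ fun ω => norm_nonneg _) hgint ?_
    filter_upwards [hτnn] with ω hω
    rw [splitCycle_norm φ _ hnorm x]
    calc ‖φ 0 (h * τ 0 ω) x‖ ≤ ‖x‖ * exp (-(ν * α * (h * τ 0 ω) / 2)) + K :=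
          hφ0 _ (by positivity) x
      _ = g ω := by rw [hg]; simp only [hc]; ring_nf
  -- compute ∫ g
  have hmap : ∫ ω, exp (-(c * τ 0 ω)) ∂ℙ = (1 + c)⁻¹ := by
    have : ∫ ω, exp (-(c * τ 0 ω)) ∂ℙ
        = ∫ t, exp (-(c * t)) ∂(Measure.map (τ 0) ℙ) := by
      rw [integral_map (hmeas 0).aemeasurable ((by fun_prop : Measurable fun t : ℝ => exp (-(c * t))).aestronglyMeasurable)]
    rw [this, hdist 0, expMoment hcpos]
  have hgval : ∫ ω, g ω ∂ℙ = (1 + c)⁻¹ * ‖x‖ + K := by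
    rw [hg, integral_add (hint1.const_mul ‖x‖) (integrable_const K),
      MeasureTheory.integral_const_mul, hmap, integral_const, probReal_univ]
    simp [mul_comm]
  exact hle.trans_eq hgval
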